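/- If F ⊆ ω^ω has cardinality strictly less than cov(ℳ), then there exists g ∈ ω^ω such that for every f ∈ F, the set {n ∈ ω : f(n) = g(n)} is infinite. -/

import Mathlib

open Set Filter Topology TopologicalSpace

def IsNetwork (X : Type) [TopologicalSpace X] (N : Set (Set X)) : Prop :=
  ∀ (x : X) (U : Set X), IsOpen U → x ∈ U → ∃ A ∈ N, x ∈ A ∧ A ⊆ U

def IsNetworkAt (X : Type) [TopologicalSpace X] (N : Set (Set X)) (x : X) : Prop :=
  ∀ U : Set X, IsOpen U → x ∈ U → ∃ A ∈ N, x ∈ A ∧ A ⊆ U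

def HasCountableNetwork (X : Type) [TopologicalSpace X] : Prop :=
  ∃ N : Set (Set X), N.Countable ∧ IsNetwork X N

def MNwSelective (X : Type) [TopologicalSpace X] : Prop :=
  HasCountableNetwork X ∧
  ∀ N : ℕ → Set (Set X), (∀ n, (N n).Countable ∧ IsNetwork X (N n)) →
    ∃ F : ℕ → Set (Set X), (∀ n, F n ⊆ N n ∧ (F n).Finite) ∧
      IsNetwork X (⋃ n, F n)

def RNwSelective (X : Type) [TopologicalSpace X] : Prop :=
  HasCountableNetwork X ∧
  ∀ N : ℕ → Set (Set X), (∀ n, (N n).Countable ∧ IsNetwork X (N n)) →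
    ∃ s : ℕ → Set X, (∀ n, s n ∈ N n) ∧ IsNetwork X (Set.range s)

def HNwSelective (X : Type) [TopologicalSpace X] : Prop :=
  HasCountableNetwork X ∧
  ∀ N : ℕ → Set (Set X), (∀ n, (N n).Countable ∧ IsNetwork X (N n)) →
    ∃ F : ℕ → Set (Set X), (∀ n, F n ⊆ N n ∧ (F n).Finite) ∧
      ∀ (x : X) (U : Set X), IsOpen U → x ∈ U →
        ∃ k : ℕ, ∀ n ≥ k, ∃ A ∈ F n, x ∈ A ∧ A ⊆ U

noncomputable def dominatingNumber : Cardinal :=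
  sInf {c | ∃ D : Set (ℕ → ℕ), Cardinal.mk D = c ∧
    ∀ g : ℕ → ℕ, ∃ f ∈ D, ∀ᶠ n in atTop, g n ≤ f n}

noncomputable def boundingNumber : Cardinal :=
  sInf {c | ∃ B : Set (ℕ → ℕ), Cardinal.mk B = c ∧
    ∀ g : ℕ → ℕ, ∃ f ∈ B, ¬ (∀ᶠ n in atTop, f n ≤ g n)}

noncomputable def covMeager : Cardinal :=
  sInf {c | ∃ S : Set (Set ℝ), Cardinal.mk S = c ∧ (∀ s ∈ S, IsMeagre s) ∧ ⋃₀ S = Set.univ}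

noncomputable def weight' (X : Type) [TopologicalSpace X] : Cardinal :=
  sInf {c | ∃ B : Set (Set X), Cardinal.mk B = c ∧ TopologicalSpace.IsTopologicalBasis B}


namespace Stmt10Aux

/-- `One x t` says that the `t`-th binary digit of `x` (suitably read off via floors) is `1`. -/
def One (x : ℝ) (t : ℕ) : Prop := ⌊x * 2 ^ (t + 1)⌋ = 2 * ⌊x * 2 ^ t⌋ + 1

/-- decode a function ℕ → ℕ from the positions of the `1` digits of `x`. -/
noncomputable def gg (x : ℝ) : ℕ → ℕ
  | 0 => Nat.nth (One x) 0
  | n + 1 => Nat.nth (One x) (n + 1) - Nat.nth (One x) n - 1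

lemma epow (r : ℝ) (t s : ℕ) : r * 2 ^ (t + s) = r * 2 ^ t * 2 ^ s := by
  rw [pow_add]; ring

lemma range_trans {x : ℝ} {m M : ℤ} {t s : ℕ}
    (hm1 : M * 2 ^ s ≤ m) (hm2 : m + 1 ≤ (M + 1) * 2 ^ s)
    (h1 : (m : ℝ) ≤ x * 2 ^ (t + s)) (h2 : x * 2 ^ (t + s) < (m : ℝ) + 1) :
    (M : ℝ) ≤ x * 2 ^ t ∧ x * 2 ^ t < (M : ℝ) + 1 := by
  have hs : (0:ℝ) < 2 ^ s := by positivity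
  rw [epow] at h1 h2
  constructor
  · have c1 : (M:ℝ) * 2 ^ s ≤ x * 2 ^ t * 2 ^ s := le_trans (by exact_mod_cast hm1) h1
    exact le_of_mul_le_mul_right c1 hs
  · have c2 : x * 2 ^ t * 2 ^ s < ((M:ℝ) + 1) * 2 ^ s :=
      lt_of_lt_of_le h2 (by exact_mod_cast hm2)
    exact lt_of_mul_lt_mul_right c2 hs.le

lemma floor_eval {x : ℝ} {m M : ℤ} {t s : ℕ}
    (hm1 : M * 2 ^ s ≤ m) (hm2 : m + 1 ≤ (M + 1) * 2 ^ s)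
    (h1 : (m : ℝ) ≤ x * 2 ^ (t + s)) (h2 : x * 2 ^ (t + s) < (m : ℝ) + 1) :
    ⌊x * 2 ^ t⌋ = M := by
  obtain ⟨l1, l2⟩ := range_trans hm1 hm2 h1 h2
  rw [Int.floor_eq_iff]
  exact ⟨l1, l2⟩

lemma floor_le_aux {z w : ℝ} {m : ℤ} {s : ℕ}
    (hz : z * 2 ^ s < (m : ℝ) + 1) (hw : (m : ℝ) ≤ w * 2 ^ s) : ⌊z⌋ ≤ ⌊w⌋ := by
  by_contra hlt
  push_neg at hlt
  set P := ⌊z⌋ with hP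
  have h1 : w < (P : ℝ) := by
    have h3 : (⌊w⌋ : ℝ) + 1 ≤ (P : ℝ) := by exact_mod_cast hlt
    linarith [Int.lt_floor_add_one w]
  have h2 : (P : ℝ) ≤ z := Int.floor_le z
  have hs : (0:ℝ) < 2 ^ s := by positivity
  have c1 : (m:ℝ) < (P:ℝ) * 2 ^ s := lt_of_le_of_lt hw (mul_lt_mul_of_pos_right h1 hs)
  have c2 : (P:ℝ) * 2 ^ s < (m:ℝ) + 1 := lt_of_le_of_lt (mul_le_mul_of_nonneg_right h2 hs.le) hz
  have c1' : m < P * 2 ^ s := by exact_mod_cast c1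
  have c2' : P * 2 ^ s < m + 1 := by exact_mod_cast c2
  omega

lemma floor_congr {x y : ℝ} {m : ℤ} {K : ℕ}
    (hx1 : (m:ℝ) ≤ x * 2 ^ K) (hx2 : x * 2 ^ K < (m:ℝ) + 1)
    (hy1 : (m:ℝ) ≤ y * 2 ^ K) (hy2 : y * 2 ^ K < (m:ℝ) + 1)
    {t : ℕ} (ht : t ≤ K) : ⌊x * 2 ^ t⌋ = ⌊y * 2 ^ t⌋ := by
  have e : ∀ r : ℝ, r * 2 ^ t * 2 ^ (K - t) = r * 2 ^ K := by
    intro r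
    rw [← epow, show t + (K - t) = K from by omega]
  apply le_antisymm
  · exact floor_le_aux (m := m) (s := K - t) (by rw [e]; exact hx2) (by rw [e]; exact hy1)
  · exact floor_le_aux (m := m) (s := K - t) (by rw [e]; exact hy2) (by rw [e]; exact hx1)

lemma One_congr {x y : ℝ} {m : ℤ} {K : ℕ}
    (hx1 : (m:ℝ) ≤ x * 2 ^ K) (hx2 : x * 2 ^ K < (m:ℝ) + 1)
    (hy1 : (m:ℝ) ≤ y * 2 ^ K) (hy2 : y * 2 ^ K < (m:ℝ) + 1)
    {t : ℕ} (ht : t < K) : One x t ↔ One y t := by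
  unfold One
  rw [floor_congr hx1 hx2 hy1 hy2 (le_of_lt ht),
    floor_congr hx1 hx2 hy1 hy2 (by omega : t + 1 ≤ K)]

lemma count_congr {P R : ℕ → Prop} [DecidablePred P] [DecidablePred R] :
    ∀ K : ℕ, (∀ t, t < K → (P t ↔ R t)) → Nat.count P K = Nat.count R K := by
  intro K
  induction K with
  | zero => intro _; rfl
  | succ K ih =>
    intro h
    rw [Nat.count_succ, Nat.count_succ, ih (fun t ht => h t (by omega))]
    by_cases hp : P K
    · rw [if_pos hp, if_pos ((h K (by omega)).mp hp)]
    · rw [if_neg hp, if_neg (fun hr => hp ((h K (by omega)).mpr hr))]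


set_option maxHeartbeats 1000000 in
lemma key (f : ℕ → ℕ) (k : ℕ) (a b : ℝ) (hab : a < b) :
    ∃ u v : ℝ, u < v ∧ Set.Ioo u v ⊆ Set.Ioo a b ∧
      ∃ n, k ≤ n ∧ ∀ x ∈ Set.Ioo u v, gg x n = f n := by
  classical
  obtain ⟨N, hN⟩ := exists_nat_gt (2 / (b - a))
  set K := N with hKdef
  have hba : 0 < b - a := by linarith
  have hpow : (2:ℝ) / (b - a) < 2 ^ K := by
    refine lt_of_lt_of_le hN ?_
    exact_mod_cast (Nat.lt_two_pow_self (n := N)).le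
  have h2K : (2:ℝ) < (b - a) * 2 ^ K := by
    rw [div_lt_iff₀ hba] at hpow; linarith
  set m0 : ℤ := ⌊a * 2 ^ K⌋ + 1 with hm0
  have hK2pos : (0:ℝ) < 2 ^ K := by positivity
  have ham : a * 2 ^ K < (m0 : ℝ) := by
    have h := Int.lt_floor_add_one (a * 2 ^ K)
    rw [hm0]; push_cast; linarith
  have hbm : (m0:ℝ) + 1 < b * 2 ^ K := by
    have h := Int.floor_le (a * 2 ^ K)
    rw [hm0]; push_cast; linarith
  set x0 : ℝ := (m0 : ℝ) / 2 ^ K with hx0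
  have hx0K : x0 * 2 ^ K = (m0:ℝ) := div_mul_cancel₀ _ (by positivity)
  set j := Nat.count (One x0) K with hj
  set n := j + k + 1 with hn
  set A : ℤ := 2 ^ (k + 1) with hA
  set B : ℤ := 2 ^ (f n + 1) with hB
  set L := k + f n + 2 with hL
  set Q := K + k + f n + 1 with hQ
  have hQ1 : Q + 1 = K + L := by omega
  have hABL : (2:ℤ) ^ L = A * B := by
    rw [hA, hB, ← pow_add]; congr 1; omega
  have hA2 : (2:ℤ) ≤ A := by
    rw [hA]
    calc (2:ℤ) = 2 ^ 1 := (pow_one 2).symm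
    _ ≤ 2 ^ (k+1) := pow_le_pow_right₀ (by norm_num) (by omega)
  have hB2 : (2:ℤ) ≤ B := by
    rw [hB]
    calc (2:ℤ) = 2 ^ 1 := (pow_one 2).symm
    _ ≤ 2 ^ (f n + 1) := pow_le_pow_right₀ (by norm_num) (by omega)
  set c : ℤ := (A - 1) * B + 1 with hc
  set m' : ℤ := m0 * 2 ^ L + c with hm'
  have hQpos : (0:ℝ) < 2 ^ (Q + 1) := by positivity
  have hm1K : m0 * 2 ^ L ≤ m' := by
    have h0 : (0:ℤ) ≤ (A - 1) * B := mul_nonneg (by linarith) (by linarith)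
    rw [hm', hc]; linarith
  have hm2K : m' + 1 ≤ (m0 + 1) * 2 ^ L := by
    rw [hm', hc, hABL]; linarith [hB2]
  have main : ∀ x : ℝ, (m':ℝ)/2^(Q+1) < x → x < ((m':ℝ)+1)/2^(Q+1) →
      (a < x ∧ x < b) ∧ gg x n = f n := by
    intro x hxu hxv
    have hx1 : (m':ℝ) ≤ x * 2 ^ (K + L) := by
      rw [div_lt_iff₀ hQpos] at hxu
      rw [← hQ1]; linarith
    have hx2 : x * 2 ^ (K + L) < (m':ℝ) + 1 := by
      rw [lt_div_iff₀ hQpos] at hxv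
      rw [← hQ1]; linarith
    obtain ⟨hxKl, hxKu⟩ := range_trans hm1K hm2K hx1 hx2
    have hax : a < x := by
      have h := lt_of_lt_of_le ham hxKl
      exact lt_of_mul_lt_mul_right h hK2pos.le
    have hxb : x < b := by
      have h := lt_of_lt_of_le hxKu hbm.le
      exact lt_of_mul_lt_mul_right h hK2pos.le
    have hx0l : (m0:ℝ) ≤ x0 * 2 ^ K := le_of_eq hx0K.symm
    have hx0u : x0 * 2 ^ K < (m0:ℝ) + 1 := by rw [hx0K]; linarith
    have hjx : Nat.count (One x) K = j := by
      rw [hj]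
      exact count_congr K (fun t ht => One_congr hxKl hxKu hx0l hx0u ht)
    -- floors in the region of appended digits
    have flA : ∀ i : ℕ, i ≤ k + 1 → ⌊x * 2 ^ (K + i)⌋ = (m0 + 1) * 2 ^ i - 1 := by
      intro i hi
      apply floor_eval (m := m') (s := Q + 1 - (K + i))
      · have e1 : (2:ℤ) ^ i * 2 ^ (Q + 1 - (K + i)) = A * B := by
          rw [hA, hB, ← pow_add, ← pow_add]; congr 1; omega
        have e2 : B ≤ 2 ^ (Q + 1 - (K + i)) := by
          rw [hB]; exact pow_le_pow_right₀ (by norm_num) (by omega)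
        have e3 : ((m0+1) * 2 ^ i - 1) * 2 ^ (Q + 1 - (K + i))
            = m0 * (A * B) + A * B - 2 ^ (Q + 1 - (K + i)) := by
          calc ((m0+1) * 2 ^ i - 1) * 2 ^ (Q + 1 - (K + i))
              = (m0+1) * (2 ^ i * 2 ^ (Q + 1 - (K + i))) - 2 ^ (Q + 1 - (K + i)) := by ring
          _ = (m0+1) * (A * B) - 2 ^ (Q + 1 - (K + i)) := by rw [e1]
          _ = m0 * (A * B) + A * B - 2 ^ (Q + 1 - (K + i)) := by ring
        rw [e3, hm', hc, hABL]; linarith [e2]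
      · have e1 : (2:ℤ) ^ i * 2 ^ (Q + 1 - (K + i)) = A * B := by
          rw [hA, hB, ← pow_add, ← pow_add]; congr 1; omega
        have e4 : ((m0+1) * 2 ^ i - 1 + 1) * 2 ^ (Q + 1 - (K + i)) = (m0+1) * (A * B) := by
          rw [sub_add_cancel]
          calc (m0+1) * 2 ^ i * 2 ^ (Q + 1 - (K + i))
              = (m0+1) * (2 ^ i * 2 ^ (Q + 1 - (K + i))) := by ring
          _ = (m0+1) * (A * B) := by rw [e1]
        rw [e4, hm', hc, hABL]; linarith [hB2]
      · rw [show K + i + (Q + 1 - (K + i)) = K + L from by omega]; exact hx1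
      · rw [show K + i + (Q + 1 - (K + i)) = K + L from by omega]; exact hx2
    set R : ℤ := (m0 + 1) * A - 1 with hR
    have flB : ∀ u : ℕ, u ≤ f n → ⌊x * 2 ^ (K + k + 1 + u)⌋ = R * 2 ^ u := by
      intro u hu
      apply floor_eval (m := m') (s := Q + 1 - (K + k + 1 + u))
      · have e1 : (2:ℤ) ^ u * 2 ^ (Q + 1 - (K + k + 1 + u)) = B := by
          rw [hB, ← pow_add]; congr 1; omega
        have e3 : R * 2 ^ u * 2 ^ (Q + 1 - (K + k + 1 + u)) = R * B := by
          rw [mul_assoc, e1]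
        rw [e3, hR, hm', hc, hABL]; linarith
      · have e1 : (2:ℤ) ^ u * 2 ^ (Q + 1 - (K + k + 1 + u)) = B := by
          rw [hB, ← pow_add]; congr 1; omega
        have e5 : (R * 2 ^ u + 1) * 2 ^ (Q + 1 - (K + k + 1 + u))
            = R * B + 2 ^ (Q + 1 - (K + k + 1 + u)) := by
          rw [add_mul, one_mul, mul_assoc, e1]
        have e6 : (2:ℤ) ≤ 2 ^ (Q + 1 - (K + k + 1 + u)) := by
          calc (2:ℤ) = 2 ^ 1 := (pow_one 2).symm
          _ ≤ _ := pow_le_pow_right₀ (by norm_num) (by omega)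
        rw [e5, hR, hm', hc, hABL]; linarith [e6]
      · rw [show K + k + 1 + u + (Q + 1 - (K + k + 1 + u)) = K + L from by omega]; exact hx1
      · rw [show K + k + 1 + u + (Q + 1 - (K + k + 1 + u)) = K + L from by omega]; exact hx2
    have flC : ⌊x * 2 ^ (Q + 1)⌋ = m' := by
      apply floor_eval (m := m') (s := 0)
      · simp
      · simp
      · rw [show Q + 1 + 0 = K + L from by omega]; exact hx1
      · rw [show Q + 1 + 0 = K + L from by omega]; exact hx2
    have hOneA : ∀ i, i ≤ k → One x (K + i) := by
      intro i hi
      have f1 := flA i (by omega)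
      have f2 := flA (i+1) (by omega)
      unfold One
      rw [show K + i + 1 = K + (i+1) from by omega, f2, f1, pow_succ]
      ring
    have hZero : ∀ u, u < f n → ¬ One x (K + k + 1 + u) := by
      intro u hu hone
      have f1 := flB u (by omega)
      have f2 := flB (u+1) (by omega)
      unfold One at hone
      rw [show K + k + 1 + u + 1 = K + k + 1 + (u+1) from by omega, f2, f1, pow_succ] at hone
      linarith [hone]
    have hOneQ : One x Q := by
      have f1 := flB (f n) le_rfl
      unfold One
      rw [flC, show Q = K + k + 1 + f n from by omega, f1, hm', hc, hR, hABL, hA, hB, pow_succ]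
      ring
    have hcount1 : ∀ i : ℕ, i ≤ k + 1 → Nat.count (One x) (K + i) = j + i := by
      intro i hi
      induction i with
      | zero => simpa using hjx
      | succ i ih =>
        rw [show K + (i+1) = (K + i) + 1 from rfl, Nat.count_succ,
          ih (by omega), if_pos (hOneA i (by omega))]
        omega
    have hcount2 : ∀ u : ℕ, u ≤ f n → Nat.count (One x) (K + k + 1 + u) = j + k + 1 := by
      intro u hu
      induction u with
      | zero =>
        have h1 := hcount1 (k+1) le_rfl
        rw [show K + k + 1 + 0 = K + (k + 1) from by omega]
        omega
      | succ u ih =>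
        rw [show K + k + 1 + (u+1) = (K + k + 1 + u) + 1 from rfl, Nat.count_succ,
          if_neg (hZero u (by omega)), ih (by omega)]
    have hnth1 : Nat.nth (One x) (j + k) = K + k := by
      have h1 : One x (K + k) := hOneA k le_rfl
      have h2 := hcount1 k (by omega)
      calc Nat.nth (One x) (j + k) = Nat.nth (One x) (Nat.count (One x) (K + k)) := by rw [h2]
      _ = K + k := Nat.nth_count h1
    have hnth2 : Nat.nth (One x) (j + k + 1) = Q := by
      have h2 := hcount2 (f n) le_rfl
      have h3 : Nat.nth (One x) (Nat.count (One x) (K + k + 1 + f n)) = K + k + 1 + f n :=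
        Nat.nth_count (by rw [show K + k + 1 + f n = Q from by omega]; exact hOneQ)
      rw [h2] at h3
      rw [h3]; omega
    refine ⟨⟨hax, hxb⟩, ?_⟩
    have e : gg x n = Nat.nth (One x) (j + k + 1) - Nat.nth (One x) (j + k) - 1 := by
      rw [hn]; rfl
    rw [e, hnth1, hnth2]
    omega
  refine ⟨(m':ℝ)/2^(Q+1), ((m':ℝ)+1)/2^(Q+1), ?_, ?_, n, by omega, ?_⟩
  · exact (div_lt_div_iff_of_pos_right hQpos).mpr (by linarith)
  · intro x hx
    exact ⟨(main x hx.1 hx.2).1.1, (main x hx.1 hx.2).1.2⟩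
  · intro x hx
    exact (main x hx.1 hx.2).2


lemma nwd (f : ℕ → ℕ) (k : ℕ) :
    IsNowhereDense {x : ℝ | ∀ n, k ≤ n → f n ≠ gg x n} := by
  show interior (closure {x : ℝ | ∀ n, k ≤ n → f n ≠ gg x n}) = ∅
  rw [Set.eq_empty_iff_forall_notMem]
  intro x hx
  obtain ⟨ε, hε, hball⟩ := Metric.isOpen_iff.mp isOpen_interior x hx
  have hsub : Set.Ioo (x - ε) (x + ε) ⊆ closure {x : ℝ | ∀ n, k ≤ n → f n ≠ gg x n} := by
    rw [← Real.ball_eq_Ioo]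
    exact hball.trans interior_subset
  obtain ⟨u, v, huv, hsub2, n, hn, hgg⟩ := key f k (x - ε) (x + ε) (by linarith)
  have hy : (u + v) / 2 ∈ Set.Ioo u v := ⟨by linarith, by linarith⟩
  have hyc : (u + v) / 2 ∈ closure {x : ℝ | ∀ n, k ≤ n → f n ≠ gg x n} := hsub (hsub2 hy)
  rw [mem_closure_iff] at hyc
  obtain ⟨z, hz1, hz2⟩ := hyc (Set.Ioo u v) isOpen_Ioo hy
  exact (hz2 n hn) (hgg z hz1).symm

lemma meag (f : ℕ → ℕ) : IsMeagre {x : ℝ | {n : ℕ | f n = gg x n}.Finite} := by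
  have h1 : ∀ k : ℕ, IsMeagre {x : ℝ | ∀ n, k ≤ n → f n ≠ gg x n} := by
    intro k
    refine isMeagre_iff_countable_union_isNowhereDense.mpr
      ⟨{{x : ℝ | ∀ n, k ≤ n → f n ≠ gg x n}}, ?_, Set.countable_singleton _, ?_⟩
    · intro t ht
      rw [Set.mem_singleton_iff] at ht
      rw [ht]
      exact nwd f k
    · intro y hy
      exact ⟨_, Set.mem_singleton _, hy⟩
  refine (isMeagre_iUnion h1).mono ?_
  intro x hx
  obtain ⟨k, hk⟩ := (hx : Set.Finite _).bddAbove
  rw [Set.mem_iUnion]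
  refine ⟨k + 1, ?_⟩
  intro n hn heq
  have h2 : n ∈ {n : ℕ | f n = gg x n} := heq
  have h3 := hk h2
  omega

end Stmt10Aux

theorem stmt10 (F : Set (ℕ → ℕ)) (h : Cardinal.mk F < covMeager) :
    ∃ g : ℕ → ℕ, ∀ f ∈ F, {n : ℕ | f n = g n}.Infinite := by
  by_contra hcon
  push_neg at hcon
  set S : Set (Set ℝ) :=
    Set.range (fun f : F => {x : ℝ | {n : ℕ | (f : ℕ → ℕ) n = Stmt10Aux.gg x n}.Finite}) with hS
  have hmem : Cardinal.mk S ∈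
      {c | ∃ S : Set (Set ℝ), Cardinal.mk S = c ∧ (∀ s ∈ S, IsMeagre s) ∧ ⋃₀ S = Set.univ} := by
    refine ⟨S, rfl, ?_, ?_⟩
    · rintro s ⟨f, rfl⟩
      exact Stmt10Aux.meag f
    · ext x
      simp only [Set.mem_sUnion, Set.mem_univ, iff_true]
      obtain ⟨f, hf, hfin⟩ := hcon (Stmt10Aux.gg x)
      exact ⟨_, ⟨⟨f, hf⟩, rfl⟩, hfin⟩
  have h1 : covMeager ≤ Cardinal.mk S := csInf_le' hmem
  have h2 : Cardinal.mk S ≤ Cardinal.mk F := Cardinal.mk_range_le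
  exact absurd h (not_lt.mpr (h1.trans h2))
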